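/- arXiv:2210.02171 — 4 statements merged into one kernel-verified Lean document; each statement's English description precedes it below -/
import Mathlib

section
/- Let H be an RKHS with kernel k on X, and let P, Q be Borel probability measures with mean embeddings μ_P ≠ μ_Q in H. Let d = ‖μ_P − μ_Q‖_H and h⁺ = (μ_P − μ_Q)/d. For ε > 0, let A_ε = {h ∈ H : ‖h‖_H ≤ 1 and ∫h dP − ∫h dQ ≥ d − ε}. Then every h_ε ∈ A_ε satisfies ‖h_ε − h⁺‖_H² ≤ 2ε/d. In particular, any sequence h_m ∈ A_{1/m} converges to h⁺ in H. -/
open MeasureTheory Filter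
open scoped RealInnerProductSpace

/-- with mean embeddings `μ_P ≠ μ_Q`, `d = ‖μ_P − μ_Q‖` and witness
`h⁺ = (μ_P − μ_Q)/d`, every `h` in the unit ball with `∫h dP − ∫h dQ ≥ d − ε` satisfies
`‖h − h⁺‖² ≤ 2ε/d`; in particular any sequence `h_m ∈ A_{1/m}` converges to `h⁺` in the
RKHS.  (Feature-map model: `f(x) = ⟪f, K x⟫`.) -/
theorem near_maximizers_converge {X H : Type*} [MeasurableSpace X]
    [NormedAddCommGroup H] [InnerProductSpace ℝ H]
    (K : X → H) (P Q : Measure X) [IsProbabilityMeasure P] [IsProbabilityMeasure Q]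
    (μP μQ : H)
    (hP : ∀ f : H, ∫ x, ⟪f, K x⟫ ∂P = ⟪f, μP⟫)
    (hQ : ∀ f : H, ∫ x, ⟪f, K x⟫ ∂Q = ⟪f, μQ⟫)
    (hne : μP ≠ μQ) :
    (∀ ε > (0 : ℝ), ∀ h : H, ‖h‖ ≤ 1 →
      ‖μP - μQ‖ - ε ≤ (∫ x, ⟪h, K x⟫ ∂P) - (∫ x, ⟪h, K x⟫ ∂Q) →
      ‖h - ‖μP - μQ‖⁻¹ • (μP - μQ)‖ ^ 2 ≤ 2 * ε / ‖μP - μQ‖) ∧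
    (∀ hs : ℕ → H,
      (∀ m : ℕ, ‖hs m‖ ≤ 1 ∧
        ‖μP - μQ‖ - 1 / (m + 1 : ℝ) ≤ (∫ x, ⟪hs m, K x⟫ ∂P) - ∫ x, ⟪hs m, K x⟫ ∂Q) →
      Tendsto hs atTop (nhds (‖μP - μQ‖⁻¹ • (μP - μQ)))) := by
  set v := μP - μQ with hv
  set d := ‖v‖ with hd
  have hvne : v ≠ 0 := sub_ne_zero_of_ne hne
  have hdpos : 0 < d := norm_pos_iff.mpr hvne
  have key : ∀ ε > (0 : ℝ), ∀ h : H, ‖h‖ ≤ 1 →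
      d - ε ≤ (∫ x, ⟪h, K x⟫ ∂P) - (∫ x, ⟪h, K x⟫ ∂Q) →
      ‖h - d⁻¹ • v‖ ^ 2 ≤ 2 * ε / d := by
    intro ε hε h hn hle
    have hint : (∫ x, ⟪h, K x⟫ ∂P) - (∫ x, ⟪h, K x⟫ ∂Q) = ⟪h, v⟫ := by
      rw [hP, hQ, hv, inner_sub_right]
    rw [hint] at hle
    have hnormsq : ‖h - d⁻¹ • v‖ ^ 2 = ‖h‖ ^ 2 - 2 * ⟪h, d⁻¹ • v⟫ + ‖d⁻¹ • v‖ ^ 2 :=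
      norm_sub_sq_real h (d⁻¹ • v)
    have hinner : ⟪h, d⁻¹ • v⟫ = d⁻¹ * ⟪h, v⟫ := real_inner_smul_right h v d⁻¹
    have hnu : ‖d⁻¹ • v‖ = 1 := by
      rw [norm_smul, Real.norm_eq_abs, abs_inv, abs_of_pos hdpos, ← hd]
      field_simp
    have hh2 : ‖h‖ ^ 2 ≤ 1 := by nlinarith [norm_nonneg h]
    have hinnge : d⁻¹ * ⟪h, v⟫ ≥ d⁻¹ * (d - ε) :=
      mul_le_mul_of_nonneg_left hle (inv_nonneg.mpr hdpos.le)
    rw [hnormsq, hinner, hnu]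
    rw [le_div_iff₀ hdpos]
    have hid : d⁻¹ * d = 1 := inv_mul_cancel₀ hdpos.ne'
    nlinarith [hinnge, mul_le_mul_of_nonneg_right hinnge hdpos.le]
  constructor
  · exact key
  · intro hs hm
    rw [tendsto_iff_norm_sub_tendsto_zero]
    have hb : ∀ m : ℕ, ‖hs m - d⁻¹ • v‖ ≤ Real.sqrt (2 * (1 / (m + 1 : ℝ)) / d) := by
      intro m
      have := key (1 / (m + 1 : ℝ)) (by positivity) (hs m) (hm m).1 (hm m).2
      have h1 : ‖hs m - d⁻¹ • v‖ = Real.sqrt (‖hs m - d⁻¹ • v‖ ^ 2) := by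
        rw [Real.sqrt_sq (norm_nonneg _)]
      rw [h1]
      exact Real.sqrt_le_sqrt this
    have hlim : Tendsto (fun m : ℕ => Real.sqrt (2 * (1 / (m + 1 : ℝ)) / d)) atTop (nhds 0) := by
      have h0 : Tendsto (fun m : ℕ => 2 * (1 / (m + 1 : ℝ)) / d) atTop (nhds 0) := by
        have : Tendsto (fun n : ℕ => 1 / ((n : ℝ) + 1)) atTop (nhds 0) :=
          tendsto_one_div_add_atTop_nhds_zero_nat
        have h2 : Tendsto (fun m : ℕ => 2 * (1 / (m + 1 : ℝ)) / d) atTop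
            (nhds (2 * 0 / d)) := by
          exact (this.const_mul 2).div_const d
        simpa using h2
      simpa [Function.comp_def] using (Real.continuous_sqrt.tendsto 0).comp h0
    exact squeeze_zero (fun m => norm_nonneg _) hb hlim
end

section
/- Let H be a Hilbert space, F its closed unit ball, and define σ : (bounded functionals on F) → ℝ by σ(g) = sup_{f∈F} g(f) for bounded real-valued functions g on F. Let φ ∈ H* be represented by a nonzero vector v ∈ H (so φ(f) = ⟨f, v⟩). Then σ, restricted to elements of ℓ^∞(F) of the form induced by continuous linear functionals, is Hadamard differentiable at φ tangentially to functionals continuous on (F, norm topology), with derivative σ'_φ(g) = g(v/‖v‖). Concretely: for any g : F → ℝ continuous with respect to the norm topology on F and any sequences t_m ↓ 0, g_m → g uniformly on F, one has (σ(φ + t_m g_m) − σ(φ))/t_m → g(v/‖v‖). -/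
open Filter
open scoped RealInnerProductSpace

/-- Hadamard differentiability (in the sequential sense) of the supremum
functional `σ(g) = sup_{f ∈ F} g(f)` over the closed unit ball `F` of a Hilbert space, at
the bounded functional `φ(f) = ⟪f, v⟫` (`v ≠ 0`), tangentially to norm-continuous bounded
functionals, with derivative `σ'_φ(g) = g(v/‖v‖)`: for any positive null sequence `t_m`
and any bounded `g_m → g` uniformly on `F` with `g` norm-continuous and bounded,
`(σ(φ + t_m g_m) − σ(φ))/t_m → g(v/‖v‖)`. -/
theorem sup_hadamard_differentiable {H : Type*}
    [NormedAddCommGroup H] [InnerProductSpace ℝ H]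
    (v : H) (hv : v ≠ 0) (hmem : ‖(‖v‖⁻¹ • v : H)‖ ≤ 1)
    (g : {f : H // ‖f‖ ≤ 1} → ℝ) (hgc : Continuous g) (hgb : ∃ M : ℝ, ∀ f, |g f| ≤ M)
    (t : ℕ → ℝ) (htpos : ∀ m, 0 < t m) (ht0 : Tendsto t atTop (nhds 0))
    (gs : ℕ → {f : H // ‖f‖ ≤ 1} → ℝ) (hgsb : ∀ m, ∃ M : ℝ, ∀ f, |gs m f| ≤ M)
    (hunif : TendstoUniformly gs g atTop) :
    Tendsto
      (fun m =>
        ((⨆ f : {f : H // ‖f‖ ≤ 1}, (⟪f.1, v⟫ + t m * gs m f)) -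
          ⨆ f : {f : H // ‖f‖ ≤ 1}, ⟪f.1, v⟫) / t m)
      atTop (nhds (g ⟨‖v‖⁻¹ • v, hmem⟩)) := by
  haveI : Nonempty {f : H // ‖f‖ ≤ 1} := ⟨⟨0, by simp⟩⟩
  obtain ⟨M, hM⟩ := hgb
  set u : {f : H // ‖f‖ ≤ 1} := ⟨‖v‖⁻¹ • v, hmem⟩ with hu
  have hvn : (0:ℝ) < ‖v‖ := norm_pos_iff.mpr hv
  have hM0 : (0:ℝ) ≤ M := (abs_nonneg _).trans (hM u)
  have hun : ‖(u:H)‖ = 1 := by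
    simp [hu, norm_smul, abs_of_nonneg (inv_nonneg.mpr hvn.le),
      inv_mul_cancel₀ hvn.ne']
  have huv : ⟪(u:H), v⟫ = ‖v‖ := by
    simp only [hu, real_inner_smul_left, real_inner_self_eq_norm_sq]
    field_simp
  have hbound : ∀ f : {f : H // ‖f‖ ≤ 1}, ⟪f.1, v⟫ ≤ ‖v‖ := by
    intro f
    have h1 := real_inner_le_norm f.1 v
    nlinarith [f.2, norm_nonneg f.1]
  have hbdd0 : BddAbove (Set.range fun f : {f : H // ‖f‖ ≤ 1} => ⟪f.1, v⟫) :=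
    ⟨‖v‖, by rintro _ ⟨f, rfl⟩; exact hbound f⟩
  have hsup0 : (⨆ f : {f : H // ‖f‖ ≤ 1}, ⟪f.1, v⟫) = ‖v‖ := by
    refine le_antisymm (ciSup_le hbound) ?_
    calc ‖v‖ = ⟪(u:H), v⟫ := huv.symm
    _ ≤ _ := le_ciSup hbdd0 u
  have hbdd : ∀ m, BddAbove (Set.range fun f : {f : H // ‖f‖ ≤ 1} =>
      ⟪f.1, v⟫ + t m * gs m f) := by
    intro m
    obtain ⟨Mm, hMm⟩ := hgsb m
    refine ⟨‖v‖ + t m * Mm, ?_⟩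
    rintro _ ⟨f, rfl⟩
    dsimp only
    have h1 : gs m f ≤ Mm := (abs_le.mp (hMm f)).2
    have h2 := hbound f
    nlinarith [(htpos m).le]
  rw [Metric.tendsto_atTop]
  intro ε hε
  -- continuity at u
  obtain ⟨δ, hδpos, hδ⟩ := Metric.continuousAt_iff.mp hgc.continuousAt (ε/2) (by linarith)
  -- uniform convergence
  have hu4 : ∀ᶠ m in atTop, ∀ f, dist (g f) (gs m f) < ε/4 :=
    Metric.tendstoUniformly_iff.mp hunif (ε/4) (by linarith)
  set t₀ : ℝ := ‖v‖ * δ^2 / (2*(M + |g u| + ε + 1)) with ht₀def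
  have hden : (0:ℝ) < 2*(M + |g u| + ε + 1) := by positivity
  have ht₀pos : 0 < t₀ := by positivity
  have ht₀eq : t₀ * (2*(M + |g u| + ε + 1)) = ‖v‖ * δ^2 :=
    div_mul_cancel₀ _ hden.ne'
  have htsm : ∀ᶠ m in atTop, t m < t₀ := ht0.eventually (gt_mem_nhds ht₀pos)
  obtain ⟨N, hN⟩ := (hu4.and htsm).exists_forall_of_atTop
  refine ⟨N, fun m hm => ?_⟩
  obtain ⟨hud, hts⟩ := hN m hm
  have htm := htpos m
  set S : ℝ := ⨆ f : {f : H // ‖f‖ ≤ 1}, (⟪f.1, v⟫ + t m * gs m f) with hS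
  -- lower bound
  have hlow : ‖v‖ + t m * gs m u ≤ S := by
    calc ‖v‖ + t m * gs m u = ⟪(u:H), v⟫ + t m * gs m u := by rw [huv]
    _ ≤ S := le_ciSup (hbdd m) u
  -- upper bound
  have hupp : S ≤ ‖v‖ + t m * (g u + 3*ε/4) := by
    apply ciSup_le
    intro f
    have h1 : gs m f ≤ g f + ε/4 := by
      have := hud f
      rw [Real.dist_eq] at this
      have := abs_lt.mp this
      linarith [this.1]
    by_cases hdf : dist f u < δ
    · have h2 : g f < g u + ε/2 := by
        have := hδ hdf
        rw [Real.dist_eq] at this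
        linarith [(abs_lt.mp this).2]
      have h3 := hbound f
      nlinarith
    · push_neg at hdf
      have hfd : δ ≤ ‖f.1 - u.1‖ := by
        rwa [Subtype.dist_eq, dist_eq_norm] at hdf
      have hexp : ‖f.1 - u.1‖^2 = ‖f.1‖^2 - 2*⟪f.1, u.1⟫ + ‖(u:H)‖^2 := by
        rw [@norm_sub_sq_real]
      have hfu : ⟪f.1, (u:H)⟫ ≤ 1 - δ^2/2 := by
        nlinarith [f.2, norm_nonneg f.1, hδpos.le]
      have hfv : ⟪f.1, v⟫ = ‖v‖ * ⟪f.1, (u:H)⟫ := by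
        simp only [hu, real_inner_smul_right]
        field_simp
      have hgf : g f ≤ M := (abs_le.mp (hM f)).2
      have hgu : -|g u| ≤ g u := neg_abs_le _
      have hts' : t m < t₀ := hts
      rw [hfv]
      nlinarith [mul_le_mul_of_nonneg_left hfu hvn.le,
        mul_lt_mul_of_pos_right hts' hden]
  rw [Real.dist_eq, hsup0, abs_lt]
  constructor
  · have h1 : g u - ε/4 < gs m u := by
      have := hud u
      rw [Real.dist_eq] at this
      linarith [(abs_lt.mp this).2]
    have h2 : gs m u ≤ (S - ‖v‖) / t m := by
      rw [le_div_iff₀ htm]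
      linarith
    linarith
  · have h2 : (S - ‖v‖) / t m ≤ g u + 3*ε/4 := by
      rw [div_le_iff₀ htm]
      linarith
    linarith
end

section
/- Let H be a real Hilbert space with closed unit ball F and let v ∈ H be nonzero with φ(f) = ⟨f, v⟩. For ε > 0 set A_ε = {h ∈ F : ⟨h, v⟩ ≥ ‖v‖ − ε}. Then lim_{ε↓0} sup_{h ∈ A_ε} g(h) = g(v/‖v‖) for every function g : F → ℝ that is continuous with respect to the norm topology. -/
open Filter
open scoped RealInnerProductSpace

/-- for `v ≠ 0` in a Hilbert space with closed unit ball `F`,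
`A_ε = {h ∈ F : ⟪h, v⟫ ≥ ‖v‖ − ε}`, and every bounded norm-continuous `g : F → ℝ`,
`lim_{ε↓0} sup_{A_ε} g = g(v/‖v‖)`. -/
theorem sup_over_near_maximizers_tendsto {H : Type*}
    [NormedAddCommGroup H] [InnerProductSpace ℝ H]
    (v : H) (hv : v ≠ 0) (hmem : ‖(‖v‖⁻¹ • v : H)‖ ≤ 1)
    (g : {f : H // ‖f‖ ≤ 1} → ℝ) (hgc : Continuous g) (hgb : ∃ M : ℝ, ∀ f, |g f| ≤ M) :
    Tendsto (fun ε : ℝ =>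
        sSup (g '' {h : {f : H // ‖f‖ ≤ 1} | ‖v‖ - ε ≤ ⟪h.1, v⟫}))
      (nhdsWithin 0 (Set.Ioi 0)) (nhds (g ⟨‖v‖⁻¹ • v, hmem⟩)) := by
  obtain ⟨M, hM⟩ := hgb
  have hvn : (0 : ℝ) < ‖v‖ := norm_pos_iff.mpr hv
  set u : {f : H // ‖f‖ ≤ 1} := ⟨‖v‖⁻¹ • v, hmem⟩ with hu
  have hun : ‖(u : H)‖ = 1 := by
    simp [hu, norm_smul, abs_of_pos (inv_pos.mpr hvn), inv_mul_cancel₀ hvn.ne']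
  have huv : ⟪(u : H), v⟫ = ‖v‖ := by
    simp [hu, real_inner_smul_left, real_inner_self_eq_norm_sq]
    field_simp
  -- key distance estimate
  have key : ∀ (ε : ℝ) (h : {f : H // ‖f‖ ≤ 1}), ‖v‖ - ε ≤ ⟪h.1, v⟫ →
      ‖h.1 - (u : H)‖ ^ 2 ≤ 2 * ε / ‖v‖ := by
    intro ε h hh
    have h1 : ‖h.1 - (u : H)‖ ^ 2 = ‖h.1‖ ^ 2 - 2 * ⟪h.1, (u : H)⟫ + ‖(u : H)‖ ^ 2 :=
      norm_sub_sq_real h.1 (u : H)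
    have h2 : ⟪h.1, (u : H)⟫ = ‖v‖⁻¹ * ⟪h.1, v⟫ := by
      simp [hu, real_inner_smul_right]
    have h3 : (1 : ℝ) - ε / ‖v‖ ≤ ⟪h.1, (u : H)⟫ := by
      rw [h2]
      have := mul_le_mul_of_nonneg_left hh (inv_pos.mpr hvn).le
      calc (1 : ℝ) - ε / ‖v‖ = ‖v‖⁻¹ * (‖v‖ - ε) := by field_simp
        _ ≤ ‖v‖⁻¹ * ⟪h.1, v⟫ := this
    have h4 : ‖h.1‖ ^ 2 ≤ 1 := by
      have := h.2
      nlinarith [norm_nonneg h.1]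
    rw [h1, hun]
    have : 2 * ε / ‖v‖ = 1 - 2 * (1 - ε / ‖v‖) + 1 := by field_simp; ring
    rw [this]
    nlinarith
  -- membership of u
  have humem : ∀ ε : ℝ, 0 < ε → u ∈ {h : {f : H // ‖f‖ ≤ 1} | ‖v‖ - ε ≤ ⟪h.1, v⟫} := by
    intro ε hε
    simp only [Set.mem_setOf_eq, huv]
    linarith
  have hbdd : ∀ ε : ℝ, BddAbove (g '' {h : {f : H // ‖f‖ ≤ 1} | ‖v‖ - ε ≤ ⟪h.1, v⟫}) := by
    intro ε
    refine ⟨M, ?_⟩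
    rintro x ⟨h, -, rfl⟩
    exact (abs_le.mp (hM h)).2
  rw [Metric.tendsto_nhds]
  intro δ hδ
  obtain ⟨r, hr, hrc⟩ := Metric.continuousAt_iff.mp (hgc.continuousAt (x := u)) (δ/2) (by linarith)
  set ε₀ : ℝ := ‖v‖ * r ^ 2 / 4 with hε₀
  have hε₀pos : 0 < ε₀ := by positivity
  filter_upwards [Ioo_mem_nhdsGT_of_mem (Set.mem_Ico.mpr ⟨le_refl 0, hε₀pos⟩)] with ε hε
  obtain ⟨hε1, hε2⟩ := hε
  have hne : (g '' {h : {f : H // ‖f‖ ≤ 1} | ‖v‖ - ε ≤ ⟪h.1, v⟫}).Nonempty :=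
    ⟨g u, Set.mem_image_of_mem g (humem ε hε1)⟩
  have hlow : g u ≤ sSup (g '' {h : {f : H // ‖f‖ ≤ 1} | ‖v‖ - ε ≤ ⟪h.1, v⟫}) :=
    le_csSup (hbdd ε) (Set.mem_image_of_mem g (humem ε hε1))
  have hhigh : sSup (g '' {h : {f : H // ‖f‖ ≤ 1} | ‖v‖ - ε ≤ ⟪h.1, v⟫}) ≤ g u + δ/2 := by
    apply csSup_le hne
    rintro x ⟨h, hh, rfl⟩
    have hd2 : ‖h.1 - (u : H)‖ ^ 2 ≤ 2 * ε / ‖v‖ := key ε h hh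
    have hlt : ‖h.1 - (u : H)‖ ^ 2 < r ^ 2 := by
      have : 2 * ε / ‖v‖ < r ^ 2 / 2 := by
        rw [div_lt_div_iff₀ hvn (by norm_num : (0:ℝ) < 2)] at *
        nlinarith
      nlinarith [sq_nonneg r]
    have hdist : dist h u < r := by
      rw [Subtype.dist_eq, dist_eq_norm]
      exact lt_of_pow_lt_pow_left₀ 2 hr.le hlt
    have := hrc hdist
    rw [Real.dist_eq] at this
    linarith [(abs_lt.mp this).2]
  rw [Real.dist_eq, abs_lt]
  constructor <;> linarith
end

section
/- Let H be an RKHS on X with kernel k bounded on the diagonal, and let P be a Borel probability measure on X such that elements of H are measurable. Let X₁,…,Xₙ be i.i.d. with law P and let Pₙ = (1/n)Σ δ_{X_i} be the empirical measure, with empirical mean embedding μ_{Pₙ} = (1/n)Σ k(X_i,·). Then E‖μ_{Pₙ} − μ_P‖_H² = (1/n)(∫ k(x,x) dP(x) − ‖μ_P‖_H²); in particular ‖μ_{Pₙ} − μ_P‖_H → 0 in L² (hence in probability) as n → ∞. -/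
open MeasureTheory ProbabilityTheory Filter
open scoped RealInnerProductSpace

lemma integrable_of_bound_aux {α : Type*} [MeasurableSpace α] (ν : MeasureTheory.Measure α)
    [MeasureTheory.IsProbabilityMeasure ν] (f : α → ℝ) (c : ℝ) (hm : Measurable f)
    (hb : ∀ a, ‖f a‖ ≤ c) : MeasureTheory.Integrable f ν :=
  ⟨hm.aestronglyMeasurable, MeasureTheory.HasFiniteIntegral.of_bounded (C := c)
    (Filter.Eventually.of_forall hb)⟩

/-- for an i.i.d. sample `X₁, X₂, …` with law `Pm` on `X`, a kernel bounded
on the diagonal (feature-map model: `k x y = ⟪K x, K y⟫`), and the mean embedding `μ` of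
`Pm`, the empirical mean embedding `μ_{Pₙ} = (1/n) Σ_{i<n} K(X_i)` satisfies
`E‖μ_{Pₙ} − μ‖² = (1/n)(∫ k(x,x) dPm − ‖μ‖²)`; in particular `‖μ_{Pₙ} − μ‖ → 0` in `L²`
as `n → ∞`. -/
theorem empirical_mean_embedding_L2 {X H Ω : Type*} [MeasurableSpace X] [MeasurableSpace Ω]
    [NormedAddCommGroup H] [InnerProductSpace ℝ H] [CompleteSpace H]
    [MeasurableSpace H] [BorelSpace H] [SecondCountableTopology H]
    (K : X → H) (hKm : Measurable K)
    (Pm : Measure X) [IsProbabilityMeasure Pm]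
    (P : Measure Ω) [IsProbabilityMeasure P]
    (Xs : ℕ → Ω → X) (hXm : ∀ i, Measurable (Xs i))
    (hindep : iIndepFun Xs P)
    (hlaw : ∀ i, Measure.map (Xs i) P = Pm)
    (hbdd : ∃ C : ℝ, ∀ x, ⟪K x, K x⟫ ≤ C)
    (μ : H) (hμ : ∀ f : H, ∫ x, ⟪f, K x⟫ ∂Pm = ⟪f, μ⟫) :
    (∀ n : ℕ, 0 < n →
      ∫ ω, ‖(n : ℝ)⁻¹ • (∑ i ∈ Finset.range n, K (Xs i ω)) - μ‖ ^ 2 ∂P =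
        (1 / n) * ((∫ x, ⟪K x, K x⟫ ∂Pm) - ‖μ‖ ^ 2)) ∧
    Tendsto (fun n : ℕ => ∫ ω, ‖(n : ℝ)⁻¹ • (∑ i ∈ Finset.range n, K (Xs i ω)) - μ‖ ^ 2 ∂P)
      atTop (nhds 0) := by
  classical
  obtain ⟨C, hC⟩ := hbdd
  set C' : ℝ := max C 0 with hC'def
  have hKsq : ∀ x, ‖K x‖ ≤ Real.sqrt C' := by
    intro x
    have h1 : ‖K x‖ ^ 2 = ⟪K x, K x⟫ := (real_inner_self_eq_norm_sq _).symm
    have h2 : ⟪K x, K x⟫ ≤ C' := (hC x).trans (le_max_left C 0)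
    nlinarith [Real.sq_sqrt (le_max_right C 0 : (0:ℝ) ≤ C'), Real.sqrt_nonneg C',
      norm_nonneg (K x)]
  set B : ℝ := Real.sqrt C' + ‖μ‖ with hBdef
  have hZbd : ∀ x, ‖K x - μ‖ ≤ B := fun x =>
    (norm_sub_le _ _).trans (add_le_add_left (hKsq x) ‖μ‖)
  have hZm : Measurable (fun x => K x - μ) := hKm.sub measurable_const
  set c : ℝ := (∫ x, ⟪K x, K x⟫ ∂Pm) - ‖μ‖ ^ 2 with hcdef
  -- the integrand bound B*B for inner products of Z
  have hinner_bd : ∀ a b : X, ‖⟪K a - μ, K b - μ⟫‖ ≤ B * B := by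
    intro a b
    calc ‖⟪K a - μ, K b - μ⟫‖ ≤ ‖K a - μ‖ * ‖K b - μ‖ := norm_inner_le_norm _ _
    _ ≤ B * B := by
        have h0 : (0:ℝ) ≤ B := le_trans (norm_nonneg _) (hZbd a)
        exact mul_le_mul (hZbd a) (hZbd b) (norm_nonneg _) h0
  -- diagonal term
  have hdiag : ∀ i, ∫ ω, ⟪K (Xs i ω) - μ, K (Xs i ω) - μ⟫ ∂P = c := by
    intro i
    have hf : Measurable (fun x : X => ⟪K x - μ, K x - μ⟫) := hZm.inner hZm
    have h1 : ∫ ω, ⟪K (Xs i ω) - μ, K (Xs i ω) - μ⟫ ∂P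
        = ∫ x, ⟪K x - μ, K x - μ⟫ ∂Pm := by
      rw [← hlaw i, integral_map (hXm i).aemeasurable hf.aestronglyMeasurable]
    rw [h1]
    have hexp : ∀ x : X, ⟪K x - μ, K x - μ⟫
        = ⟪K x, K x⟫ - 2 * ⟪μ, K x⟫ + ‖μ‖ ^ 2 := by
      intro x
      rw [inner_sub_sub_self]
      rw [real_inner_self_eq_norm_sq μ, real_inner_comm (K x) μ]
      ring
    have hi1 : Integrable (fun x => ⟪K x, K x⟫) Pm :=
      integrable_of_bound_aux Pm _ (Real.sqrt C' * Real.sqrt C') (hKm.inner hKm)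
        (fun x => (norm_inner_le_norm _ _).trans
          (mul_le_mul (hKsq x) (hKsq x) (norm_nonneg _) (Real.sqrt_nonneg _)))
    have hi2 : Integrable (fun x => ⟪μ, K x⟫) Pm :=
      integrable_of_bound_aux Pm _ (‖μ‖ * Real.sqrt C') (measurable_const.inner hKm)
        (fun x => (norm_inner_le_norm _ _).trans
          (mul_le_mul_of_nonneg_left (hKsq x) (norm_nonneg _)))
    have hi3 : Integrable (fun x => ⟪K x, K x⟫ - 2 * ⟪μ, K x⟫) Pm :=
      hi1.sub (hi2.const_mul 2)
    simp only [hexp]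
    rw [integral_add hi3 (integrable_const _), integral_sub hi1 (hi2.const_mul 2),
      integral_const_mul, hμ μ, real_inner_self_eq_norm_sq, integral_const]
    simp only [measure_univ, probReal_univ, ENNReal.toReal_one, smul_eq_mul, one_mul, hcdef]
    ring
  -- off-diagonal term
  have hoff : ∀ i j, i ≠ j → ∫ ω, ⟪K (Xs i ω) - μ, K (Xs j ω) - μ⟫ ∂P = 0 := by
    intro i j hij
    have hpair : Measure.map (fun ω => (Xs i ω, Xs j ω)) P = Pm.prod Pm := by
      rw [(indepFun_iff_map_prod_eq_prod_map_map (hXm i).aemeasurable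
        (hXm j).aemeasurable).mp (hindep.indepFun hij), hlaw i, hlaw j]
    have hfm : Measurable (fun p : X × X => ⟪K p.1 - μ, K p.2 - μ⟫) :=
      (hZm.comp measurable_fst).inner (hZm.comp measurable_snd)
    have h1 : ∫ ω, ⟪K (Xs i ω) - μ, K (Xs j ω) - μ⟫ ∂P
        = ∫ p : X × X, ⟪K p.1 - μ, K p.2 - μ⟫ ∂(Pm.prod Pm) := by
      rw [← hpair, integral_map ((hXm i).prodMk (hXm j)).aemeasurable
        hfm.aestronglyMeasurable]
    rw [h1, integral_prod _ (integrable_of_bound_aux (Pm.prod Pm) _ (B * B) hfm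
      (fun p => hinner_bd p.1 p.2))]
    have hzero : ∀ a : H, ∫ y, ⟪a, K y - μ⟫ ∂Pm = 0 := by
      intro a
      have hia : Integrable (fun y => ⟪a, K y⟫) Pm :=
        integrable_of_bound_aux Pm _ (‖a‖ * Real.sqrt C') (measurable_const.inner hKm)
          (fun x => (norm_inner_le_norm _ _).trans
            (mul_le_mul_of_nonneg_left (hKsq x) (norm_nonneg _)))
      simp only [inner_sub_right]
      rw [integral_sub hia (integrable_const _), hμ a, integral_const]
      simp
    simp only [hzero]
    simp
  -- integrability of each pairwise inner product of Z under P
  have hintP : ∀ i j, Integrable (fun ω => ⟪K (Xs i ω) - μ, K (Xs j ω) - μ⟫) P := by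
    intro i j
    have hm1 : Measurable fun ω => K (Xs i ω) - μ := (hKm.comp (hXm i)).sub measurable_const
    have hm2 : Measurable fun ω => K (Xs j ω) - μ := (hKm.comp (hXm j)).sub measurable_const
    exact integrable_of_bound_aux P (fun ω => ⟪K (Xs i ω) - μ, K (Xs j ω) - μ⟫) (B * B) (hm1.inner hm2)
      (fun ω => hinner_bd _ _)
  -- main identity
  have hmain : ∀ n : ℕ, 0 < n →
      ∫ ω, ‖(n : ℝ)⁻¹ • (∑ i ∈ Finset.range n, K (Xs i ω)) - μ‖ ^ 2 ∂P = (1 / n) * c := by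
    intro n hn
    have hn' : (n : ℝ) ≠ 0 := Nat.cast_ne_zero.mpr hn.ne'
    have hrw : ∀ ω : Ω, (n : ℝ)⁻¹ • (∑ i ∈ Finset.range n, K (Xs i ω)) - μ
        = (n : ℝ)⁻¹ • (∑ i ∈ Finset.range n, (K (Xs i ω) - μ)) := by
      intro ω
      rw [Finset.sum_sub_distrib, smul_sub, Finset.sum_const, Finset.card_range,
        ← Nat.cast_smul_eq_nsmul ℝ, smul_smul, inv_mul_cancel₀ hn', one_smul]
    have hrw2 : ∀ ω : Ω, ‖(n : ℝ)⁻¹ • (∑ i ∈ Finset.range n, K (Xs i ω)) - μ‖ ^ 2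
        = ((n : ℝ)⁻¹) ^ 2 * ∑ i ∈ Finset.range n, ∑ j ∈ Finset.range n,
            ⟪K (Xs i ω) - μ, K (Xs j ω) - μ⟫ := by
      intro ω
      have hS : ‖∑ i ∈ Finset.range n, (K (Xs i ω) - μ)‖ ^ 2
          = ∑ i ∈ Finset.range n, ∑ j ∈ Finset.range n,
              ⟪K (Xs i ω) - μ, K (Xs j ω) - μ⟫ := by
        rw [← real_inner_self_eq_norm_sq, sum_inner]
        simp only [inner_sum]
      rw [hrw ω, norm_smul, mul_pow, hS, Real.norm_eq_abs,
        abs_of_nonneg (by positivity : (0:ℝ) ≤ (n:ℝ)⁻¹)]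
    simp only [hrw2]
    rw [integral_const_mul, integral_finset_sum _ (fun i _ => integrable_finset_sum _
      (fun j _ => hintP i j))]
    have hFi : ∀ i ∈ Finset.range n,
        ∫ ω, ∑ j ∈ Finset.range n, ⟪K (Xs i ω) - μ, K (Xs j ω) - μ⟫ ∂P = c := by
      intro i hi
      rw [integral_finset_sum _ (fun j _ => hintP i j),
        Finset.sum_eq_single i (fun j _ hji => hoff i j (Ne.symm hji)) (fun h => absurd hi h)]
      exact hdiag i
    rw [Finset.sum_congr rfl hFi, Finset.sum_const, Finset.card_range, nsmul_eq_mul]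
    field_simp
  refine ⟨hmain, ?_⟩
  have htend : Tendsto (fun n : ℕ => (1 / (n : ℝ)) * c) atTop (nhds 0) := by
    simpa using tendsto_one_div_atTop_nhds_zero_nat.mul_const c
  refine htend.congr' ?_
  filter_upwards [eventually_gt_atTop 0] with n hn
  exact (hmain n hn).symm
end
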